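/- In the oriented planar hitomezashi pattern Cloth_{ℤ×ℤ}(x,y), every edge of a hitomezashi path (a path alternating between horizontal and vertical oriented edges, traversed in the direction of orientation) has the same height, where the height of an edge is the average of the heights of the two square regions it borders. Equivalently, along any directed edge of a hitomezashi path, the region to the left of the direction of travel has height exactly one more than the region to the right. -/

import Mathlib

/-- The signed interval sum `Σ_a^b(z)`. -/
noncomputable def ssum (z : ℤ → ℤ) (a b : ℤ) : ℤ :=
  (∑ i ∈ Finset.Icc a b, z i) - ∑ i ∈ Finset.Icc (b + 1) (a - 1), z i

/-- The height of the square region `[i, i+1] × [j, j+1]`. -/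
noncomputable def regionHeight (x y : ℤ → ℤ) (i j : ℤ) : ℤ :=
  ssum x 0 j - ssum y 0 i

/-- A legal directed horizontal step of the oriented planar hitomezashi pattern. -/
def HStep (x : ℤ → ℤ) (u w : ℤ × ℤ) : Prop :=
  w.2 = u.2 ∧ ((x u.2 = 1 ∧ w.1 = u.1 + 1) ∨ (x u.2 = -1 ∧ w.1 = u.1 - 1))

/-- A legal directed vertical step of the oriented planar hitomezashi pattern. -/
def VStep (y : ℤ → ℤ) (u w : ℤ × ℤ) : Prop :=
  w.1 = u.1 ∧ ((y u.1 = 1 ∧ w.2 = u.2 + 1) ∨ (y u.1 = -1 ∧ w.2 = u.2 - 1))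

/-- Twice the height of the edge traversed by the step `u → w`:
the sum of the heights of the two square regions bordering the edge. -/
noncomputable def edgeHeight2 (x y : ℤ → ℤ) (u w : ℤ × ℤ) : ℤ :=
  if w.2 = u.2 then
    regionHeight x y (min u.1 w.1) u.2 + regionHeight x y (min u.1 w.1) (u.2 - 1)
  else
    regionHeight x y (u.1 - 1) (min u.2 w.2) + regionHeight x y u.1 (min u.2 w.2)

lemma ssum_step (z : ℤ → ℤ) (b : ℤ) : ssum z 0 b = ssum z 0 (b-1) + z b := by
  unfold ssum
  rw [show (0:ℤ) - 1 = -1 from by norm_num, show b - 1 + 1 = b from by omega]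
  rcases le_or_gt 0 b with h | h
  · rw [show Finset.Icc (0:ℤ) b = insert b (Finset.Icc 0 (b-1)) from by
        ext k; simp [Finset.mem_Icc]; omega,
      Finset.sum_insert (by simp [Finset.mem_Icc]),
      Finset.Icc_eq_empty (a := b+1) (by omega), Finset.Icc_eq_empty (a := b) (by omega)]
    simp; ring
  · have h1 : b ≤ -1 := by omega
    rw [show Finset.Icc b (-1:ℤ) = insert b (Finset.Icc (b+1) (-1)) from by
        ext k; simp [Finset.mem_Icc]; omega,
      Finset.sum_insert (by simp [Finset.mem_Icc]),
      Finset.Icc_eq_empty (a := 0) (b := b) (by omega),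
      Finset.Icc_eq_empty (a := 0) (b := b - 1) (by omega)]
    simp

lemma rh_x (x y : ℤ → ℤ) (i j : ℤ) :
    regionHeight x y i j = regionHeight x y i (j-1) + x j := by
  unfold regionHeight; rw [ssum_step x j]; ring

lemma rh_y (x y : ℤ → ℤ) (i j : ℤ) :
    regionHeight x y i j = regionHeight x y (i-1) j - y i := by
  unfold regionHeight; rw [ssum_step y i]; ring

lemma adj_HV (x y : ℤ → ℤ) (u w z : ℤ × ℤ)
    (h1 : HStep x u w) (h2 : VStep y w z) :
    edgeHeight2 x y u w = edgeHeight2 x y w z := by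
  obtain ⟨u1, u2⟩ := u; obtain ⟨w1, w2⟩ := w; obtain ⟨z1, z2⟩ := z
  obtain ⟨e1, h1⟩ := h1; obtain ⟨e2, h2⟩ := h2
  simp only at e1 e2 h1 h2
  subst e1 e2
  rcases h1 with ⟨hx1, hw⟩ | ⟨hx1, hw⟩ <;> rcases h2 with ⟨hy1, hz⟩ | ⟨hy1, hz⟩ <;>
      subst hw hz <;> simp only [edgeHeight2]
  · rw [if_pos trivial, if_neg (show ¬(w2+1=w2) by omega)]
    rw [show u1 ⊓ (u1+1) = u1 by omega, show w2 ⊓ (w2+1) = w2 by omega,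
      show u1+1-1 = u1 by ring]
    have h1 := rh_x x y u1 w2
    have h2 := rh_y x y (u1+1) w2
    rw [show u1+1-1 = u1 by ring] at h2
    linarith
  · rw [if_pos trivial, if_neg (show ¬(w2-1=w2) by omega)]
    rw [show u1 ⊓ (u1+1) = u1 by omega, show w2 ⊓ (w2-1) = w2-1 by omega,
      show u1+1-1 = u1 by ring]
    have h1 := rh_x x y u1 w2
    have h2 := rh_y x y (u1+1) (w2-1)
    rw [show u1+1-1 = u1 by ring] at h2
    linarith
  · rw [if_pos trivial, if_neg (show ¬(w2+1=w2) by omega)]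
    rw [show u1 ⊓ (u1-1) = u1-1 by omega, show w2 ⊓ (w2+1) = w2 by omega]
    have h1 := rh_x x y (u1-1) w2
    have h2 := rh_y x y (u1-1) w2
    linarith
  · rw [if_pos trivial, if_neg (show ¬(w2-1=w2) by omega)]
    rw [show u1 ⊓ (u1-1) = u1-1 by omega, show w2 ⊓ (w2-1) = w2-1 by omega]
    have h1 := rh_x x y (u1-1) w2
    have h2 := rh_y x y (u1-1) (w2-1)
    linarith

lemma adj_VH (x y : ℤ → ℤ) (u w z : ℤ × ℤ)
    (h1 : VStep y u w) (h2 : HStep x w z) :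
    edgeHeight2 x y u w = edgeHeight2 x y w z := by
  obtain ⟨u1, u2⟩ := u; obtain ⟨w1, w2⟩ := w; obtain ⟨z1, z2⟩ := z
  obtain ⟨e1, h1⟩ := h1; obtain ⟨e2, h2⟩ := h2
  simp only at e1 e2 h1 h2
  subst e1 e2
  rcases h1 with ⟨hy1, hw⟩ | ⟨hy1, hw⟩ <;> rcases h2 with ⟨hx1, hz⟩ | ⟨hx1, hz⟩ <;>
      subst hw hz <;> simp only [edgeHeight2]
  · rw [if_neg (show ¬(u2+1=u2) by omega), if_pos trivial]
    rw [show u2 ⊓ (u2+1) = u2 by omega, show w1 ⊓ (w1+1) = w1 by omega,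
      show u2+1-1 = u2 by ring]
    have h1 := rh_y x y w1 u2
    have h2 := rh_x x y w1 (u2+1)
    rw [show u2+1-1 = u2 by ring] at h2
    linarith
  · rw [if_neg (show ¬(u2+1=u2) by omega), if_pos trivial]
    rw [show u2 ⊓ (u2+1) = u2 by omega, show w1 ⊓ (w1-1) = w1-1 by omega,
      show u2+1-1 = u2 by ring]
    have h1 := rh_y x y w1 u2
    have h2 := rh_x x y (w1-1) (u2+1)
    rw [show u2+1-1 = u2 by ring] at h2
    linarith
  · rw [if_neg (show ¬(u2-1=u2) by omega), if_pos trivial]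
    rw [show u2 ⊓ (u2-1) = u2-1 by omega, show w1 ⊓ (w1+1) = w1 by omega]
    have h1 := rh_y x y w1 (u2-1)
    have h2 := rh_x x y w1 (u2-1)
    linarith
  · rw [if_neg (show ¬(u2-1=u2) by omega), if_pos trivial]
    rw [show u2 ⊓ (u2-1) = u2-1 by omega, show w1 ⊓ (w1-1) = w1-1 by omega]
    have h1 := rh_y x y w1 (u2-1)
    have h2 := rh_x x y (w1-1) (u2-1)
    linarith

lemma not_both (x y : ℤ → ℤ) (u w : ℤ × ℤ) (h1 : HStep x u w) (h2 : VStep y u w) :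
    False := by
  obtain ⟨e1, h1⟩ := h1; obtain ⟨e2, h2⟩ := h2
  rcases h2 with ⟨_, h2⟩ | ⟨_, h2⟩ <;> omega

theorem stmt_11 (x y : ℤ → ℤ)
    (hx : ∀ j, x j = 1 ∨ x j = -1)
    (hy : ∀ i, y i = 1 ∨ y i = -1)
    (n : ℕ) (v : ℕ → ℤ × ℤ)
    (hstep : ∀ k < n, HStep x (v k) (v (k + 1)) ∨ VStep y (v k) (v (k + 1)))
    (halt : ∀ k, k + 1 < n →
      (HStep x (v k) (v (k + 1)) ↔ VStep y (v (k + 1)) (v (k + 2)))) :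
    ∀ k < n, ∀ l < n,
      edgeHeight2 x y (v k) (v (k + 1)) = edgeHeight2 x y (v l) (v (l + 1)) := by
  have key : ∀ k, k + 1 < n →
      edgeHeight2 x y (v k) (v (k + 1)) = edgeHeight2 x y (v (k+1)) (v (k + 2)) := by
    intro k hk
    rcases hstep k (by omega) with h | h
    · exact adj_HV x y _ _ _ h ((halt k hk).1 h)
    · have h2 : HStep x (v (k+1)) (v (k+2)) := by
        rcases hstep (k+1) hk with h2 | h2
        · exact h2
        · exact absurd ((halt k hk).2 h2) (fun hh => not_both x y _ _ hh h)
      exact adj_VH x y _ _ _ h h2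
  have const : ∀ k, k < n →
      edgeHeight2 x y (v k) (v (k + 1)) = edgeHeight2 x y (v 0) (v 1) := by
    intro k
    induction k with
    | zero => intro _; rfl
    | succ m ih =>
      intro hm
      rw [← key m hm]
      exact ih (by omega)
  intro k hk l hl
  rw [const k hk, const l hl]
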